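/- arXiv:1309.2023 — 7 statements merged into one kernel-verified Lean document; each statement's English description precedes it below -/
import Mathlib

section
/- Let D be a Banach algebra which is an essential ideal in a commutative Arens regular Banach algebra A (essential means the canonical representation of A on D by multiplication is injective). If multiplication by each element of A is a weakly compact operator on A, and D has a bounded approximate identity, then A = D. -/
/-- A continuous linear map between normed spaces is weakly compact if the closure
(in the weak topology) of the image of the closed unit ball is weakly compact. -/
def IsWeaklyCompactOperator {E F : Type*} [NormedAddCommGroup E] [NormedSpace ℂ E]
    [NormedAddCommGroup F] [NormedSpace ℂ F] (T : E →L[ℂ] F) : Prop :=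
  IsCompact (closure ((toWeakSpace ℂ F) '' (T '' Metric.closedBall 0 1)))

/-- A Banach algebra `A` is Arens regular iff for every functional `φ ∈ A*` the operator
`a ↦ (b ↦ φ (a * b))` from `A` to `A*` is weakly compact. -/
def ArensRegular (A : Type*) [NormedCommRing A] [NormedAlgebra ℂ A] : Prop :=
  ∀ φ : A →L[ℂ] ℂ, IsWeaklyCompactOperator
    (((ContinuousLinearMap.compL ℂ A A ℂ) φ).comp (ContinuousLinearMap.mul ℂ A))

/-- If `D` is an essential closed ideal with a bounded approximate identity
in a commutative Arens regular Banach algebra `A`, and multiplication by every element of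
`A` is a weakly compact operator on `A`, then `A = D`. -/
theorem essential_ideal_with_bai_eq_of_weaklyCompact
    {A : Type*} [NormedCommRing A] [NormedAlgebra ℂ A] [CompleteSpace A]
    (hreg : ArensRegular A)
    (D : Ideal A) (hDclosed : IsClosed (D : Set A))
    (hess : ∀ a : A, (∀ d ∈ D, a * d = 0) → a = 0)
    (hwc : ∀ a : A, IsWeaklyCompactOperator (ContinuousLinearMap.mul ℂ A a))
    (hbai : ∃ (C : ℝ) (ι : Type) (l : Filter ι) (e : ι → A), l.NeBot ∧
      (∀ i, e i ∈ D ∧ ‖e i‖ ≤ C) ∧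
      ∀ d ∈ D, Filter.Tendsto (fun i => e i * d) l (nhds d)) :
    ∀ a : A, a ∈ D := by
  intro a
  obtain ⟨C, ι, l, e, hl, he, htend⟩ := hbai
  haveI := hl
  set c : ℝ := max C 1 with hcdef
  have hc1 : (1:ℝ) ≤ c := le_max_right _ _
  have hc0 : (0:ℝ) < c := lt_of_lt_of_le one_pos hc1
  have hcC : C ≤ c := le_max_left _ _
  have hcne : (c : ℂ) ≠ 0 := by
    exact_mod_cast ne_of_gt hc0
  -- ℂ-scalar multiples of elements of D stay in D
  have hsmulD : ∀ (z : ℂ) (d : A), d ∈ D → z • d ∈ D := by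
    intro z d hd
    rw [Algebra.smul_def]
    exact Ideal.mul_mem_left D _ hd
  -- the net
  set f : ι → WeakSpace ℂ A := fun i => toWeakSpace ℂ A ((c:ℂ)⁻¹ • (a * e i)) with hfdef
  set K := closure ((toWeakSpace ℂ A) ''
      ((ContinuousLinearMap.mul ℂ A a) '' Metric.closedBall 0 1)) with hKdef
  have hfK : ∀ i, f i ∈ K := by
    intro i
    apply subset_closure
    refine ⟨(c:ℂ)⁻¹ • (a * e i), ⟨(c:ℂ)⁻¹ • e i, ?_, ?_⟩, rfl⟩
    · rw [Metric.mem_closedBall, dist_zero_right, norm_smul]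
      have : ‖((c:ℝ):ℂ)⁻¹‖ = c⁻¹ := by
        rw [norm_inv, Complex.norm_real, Real.norm_of_nonneg hc0.le]
      rw [this]
      calc c⁻¹ * ‖e i‖ ≤ c⁻¹ * c := by
            apply mul_le_mul_of_nonneg_left (le_trans (he i).2 hcC) (inv_nonneg.mpr hc0.le)
        _ = 1 := inv_mul_cancel₀ hc0.ne'
    · simp [mul_smul_comm]
  have hle : Filter.map f l ≤ Filter.principal K := by
    exact Filter.le_principal_iff.mpr (Filter.mem_map.mpr (Filter.univ_mem' hfK))
  obtain ⟨x, hxK, hx⟩ := (hwc a).exists_clusterPt hle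
  set x₀ : A := (toWeakSpace ℂ A).symm x with hx₀def
  -- key cluster point fact for functionals
  have hkey : ∀ φ : A →L[ℂ] ℂ,
      ClusterPt (φ x₀) (Filter.map (fun i => φ ((c:ℂ)⁻¹ • (a * e i))) l) := by
    intro φ
    have hg : Continuous fun y : WeakSpace ℂ A => φ ((toWeakSpace ℂ A).symm y) :=
      WeakBilin.eval_continuous (topDualPairing ℂ A).flip φ
    have := hx.map hg.continuousAt
      (Filter.tendsto_map' (Filter.tendsto_map (f := fun i =>
        φ ((toWeakSpace ℂ A).symm (f i)))))
    simpa [hfdef] using this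
  -- cluster point + convergence gives equality
  have huniq : ∀ (g : ι → ℂ) (z w : ℂ), ClusterPt z (Filter.map g l) →
      Filter.Tendsto g l (nhds w) → z = w := by
    intro g z w hcl htd
    exact eq_of_nhds_neBot (hcl.mono htd)
  -- the net lives in D
  have hfDmem : ∀ i, (c:ℂ)⁻¹ • (a * e i) ∈ D :=
    fun i => hsmulD _ _ (Ideal.mul_mem_left D a (he i).1)
  -- x₀ ∈ D
  have hx₀D : x₀ ∈ D := by
    have hconv : Convex ℝ (D : Set A) := by
      intro u hu v hv s t hs ht hst
      have h1 : s • u ∈ D := by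
        rw [← Complex.coe_smul]; exact hsmulD _ _ hu
      have h2 : t • v ∈ D := by
        rw [← Complex.coe_smul]; exact hsmulD _ _ hv
      exact D.add_mem h1 h2
    have himgcl : IsClosed (toWeakSpace ℂ A '' (D : Set A)) := by
      have h := hconv.toWeakSpace_closure (𝕜 := ℂ)
      rw [hDclosed.closure_eq] at h
      rw [h]
      exact isClosed_closure
    have hle2 : Filter.map f l ≤ Filter.principal (toWeakSpace ℂ A '' (D : Set A)) :=
      Filter.le_principal_iff.mpr (Filter.mem_map.mpr
        (Filter.univ_mem' fun i => ⟨_, hfDmem i, rfl⟩))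
    have hmem : x ∈ toWeakSpace ℂ A '' (D : Set A) := by
      rw [← himgcl.closure_eq]
      exact mem_closure_iff_clusterPt.mpr (hx.mono hle2)
    obtain ⟨d, hdD, hdx⟩ := hmem
    have : x₀ = d := by rw [hx₀def, ← hdx, LinearEquiv.symm_apply_apply]
    rwa [this]
  -- the multiplicative identity satisfied by x₀
  have heq : ∀ d ∈ D, d * x₀ = (c:ℂ)⁻¹ • (a * d) := by
    intro d hd
    have hAD : a * d ∈ D := Ideal.mul_mem_left D a hd
    rw [← sub_eq_zero]
    apply NormedSpace.eq_zero_of_forall_dual_eq_zero ℂ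
    intro φ
    rw [map_sub, sub_eq_zero]
    have h1 := hkey (φ.comp (ContinuousLinearMap.mul ℂ A d))
    simp only [ContinuousLinearMap.coe_comp', Function.comp_apply,
      ContinuousLinearMap.mul_apply'] at h1
    have hrw : (fun i => φ (d * ((c:ℂ)⁻¹ • (a * e i)))) =
        fun i => φ ((c:ℂ)⁻¹ • (e i * (a * d))) := by
      funext i
      congr 1
      rw [mul_smul_comm]
      congr 1
      ring
    rw [hrw] at h1
    have h2 : Filter.Tendsto (fun i => φ ((c:ℂ)⁻¹ • (e i * (a * d)))) l
        (nhds (φ ((c:ℂ)⁻¹ • (a * d)))) :=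
      (φ.continuous.tendsto _).comp (((htend (a * d) hAD).const_smul ((c:ℂ)⁻¹)))
    exact huniq _ _ _ h1 h2
  -- conclude
  have hab : a = (c:ℂ) • x₀ := by
    have := hess (a - (c:ℂ) • x₀) ?_
    · exact sub_eq_zero.mp this
    · intro d hd
      have h1 : ((c:ℂ) • x₀) * d = a * d := by
        rw [smul_mul_assoc, mul_comm x₀ d, heq d hd, smul_smul,
          mul_inv_cancel₀ hcne, one_smul]
      rw [sub_mul, h1, sub_self]
  rw [hab]
  exact hsmulD _ _ hx₀D
end

section
/- Let A be a Banach algebra generated (as a closed subalgebra) by a set {g} ∪ {e_m : m ∈ ℕ}, where e_m = 2^m g e_m for each m. Suppose (x_n) is a bounded sequence in A with ‖x_n‖ ≤ 1 for all n and ‖x_n g − g‖ → 0. Then (x_n) is a contractive approximate identity for A, i.e., ‖x_n a − a‖ → 0 for every a ∈ A. -/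
/-- If a (non-unital) commutative Banach algebra `A` is topologically
generated by `{g} ∪ {eₘ : m ∈ ℕ}` where `eₘ = 2^m g eₘ`, and `(xₙ)` is a sequence of
contractions with `xₙ g → g`, then `(xₙ)` is a contractive approximate identity. -/
theorem cai_from_generators
    {A : Type*} [NonUnitalNormedCommRing A] [NormedSpace ℂ A]
    [IsScalarTower ℂ A A] [SMulCommClass ℂ A A] [CompleteSpace A]
    (g : A) (e : ℕ → A)
    (he : ∀ m : ℕ, e m = ((2 : ℂ) ^ m) • (g * e m))
    (hgen : closure ((NonUnitalAlgebra.adjoin ℂ ({g} ∪ Set.range e) :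
        NonUnitalSubalgebra ℂ A) : Set A) = Set.univ)
    (x : ℕ → A) (hx : ∀ n, ‖x n‖ ≤ 1)
    (hxg : Filter.Tendsto (fun n => x n * g) Filter.atTop (nhds g)) :
    ∀ a : A, Filter.Tendsto (fun n => x n * a) Filter.atTop (nhds a) := by
  set T : Set A := {a | Filter.Tendsto (fun n => x n * a) Filter.atTop (nhds a)} with hT
  have hmulr : ∀ a ∈ T, ∀ b : A, a * b ∈ T := by
    intro a ha b
    have h : Filter.Tendsto (fun n => (x n * a) * b) Filter.atTop (nhds (a * b)) :=
      ha.mul_const b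
    simpa [hT, Set.mem_setOf_eq, mul_assoc] using h
  have hsmul : ∀ (c : ℂ), ∀ a ∈ T, c • a ∈ T := by
    intro c a ha
    have h : Filter.Tendsto (fun n => c • (x n * a)) Filter.atTop (nhds (c • a)) :=
      ha.const_smul c
    simpa [hT, Set.mem_setOf_eq, mul_smul_comm] using h
  have hadd : ∀ a ∈ T, ∀ b ∈ T, a + b ∈ T := by
    intro a ha b hb
    have h := ha.add hb
    simpa [hT, Set.mem_setOf_eq, mul_add] using h
  have hgT : g ∈ T := hxg
  have hsub : ((NonUnitalAlgebra.adjoin ℂ ({g} ∪ Set.range e) :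
      NonUnitalSubalgebra ℂ A) : Set A) ⊆ T := by
    intro a ha
    induction ha using NonUnitalAlgebra.adjoin_induction with
    | mem b hb =>
      rcases hb with hb | ⟨m, rfl⟩
      · rw [Set.mem_singleton_iff] at hb; subst hb; exact hgT
      · rw [he m]
        exact hsmul _ _ (hmulr g hgT (e m))
    | zero =>
      simpa [hT, Set.mem_setOf_eq] using (tendsto_const_nhds : Filter.Tendsto (fun _ : ℕ => (0:A)) Filter.atTop (nhds 0))
    | add a b _ _ ha hb => exact hadd a ha b hb
    | mul a b _ _ ha hb => exact hmulr a ha b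
    | smul c a _ ha => exact hsmul c a ha
  have hclosed : IsClosed T := by
    rw [← isSeqClosed_iff_isClosed]
    intro u a hu hua
    rw [hT, Set.mem_setOf_eq, Metric.tendsto_atTop]
    intro ε hε
    obtain ⟨k, hk⟩ := (Metric.tendsto_atTop.mp hua) (ε / 3) (by linarith)
    have hk' : dist (u k) a < ε / 3 := hk k le_rfl
    obtain ⟨N, hN⟩ := (Metric.tendsto_atTop.mp (hu k)) (ε / 3) (by linarith)
    refine ⟨N, fun n hn => ?_⟩
    have e1 : x n * a - a = x n * (a - u k) + (x n * u k - u k) + (u k - a) := by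
      rw [mul_sub]; abel
    have h2 : ‖x n * (a - u k)‖ ≤ ‖x n‖ * ‖a - u k‖ := norm_mul_le _ _
    have h3 : ‖x n‖ * ‖a - u k‖ ≤ 1 * ‖a - u k‖ :=
      mul_le_mul_of_nonneg_right (hx n) (norm_nonneg _)
    have h4 : ‖a - u k‖ < ε / 3 := by
      rw [← dist_eq_norm, dist_comm]; exact hk'
    have h5 : ‖x n * u k - u k‖ < ε / 3 := by
      rw [← dist_eq_norm]; exact hN n hn
    have h6 : ‖u k - a‖ < ε / 3 := by
      rw [← dist_eq_norm]; exact hk'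
    rw [dist_eq_norm, e1]
    calc ‖x n * (a - u k) + (x n * u k - u k) + (u k - a)‖
        ≤ ‖x n * (a - u k)‖ + ‖x n * u k - u k‖ + ‖u k - a‖ := norm_add₃_le
      _ < ε := by nlinarith
  intro a
  have : a ∈ T := by
    have h1 : closure ((NonUnitalAlgebra.adjoin ℂ ({g} ∪ Set.range e) :
        NonUnitalSubalgebra ℂ A) : Set A) ⊆ T :=
      closure_minimal hsub hclosed
    exact h1 (hgen ▸ Set.mem_univ a)
  exact this
end

section
/- Let (a_j) be a strictly increasing sequence of positive integers such that a_{j+1} > 2 a_j (1 + a_1 + a_2 + ⋯ + a_j) for every j. Then for all n and all integers t_1, …, t_n with |t_i| ≤ 2a_i, the sum Σ_{i=1}^n t_i a_i is positive if and only if t_r > 0, where r = max{ j : t_j ≠ 0 }. -/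
/-- If `(aⱼ)` is strictly increasing with
`a_{j+1} > 2 aⱼ (1 + a₀ + ⋯ + aⱼ)`, then for integer coefficients `tᵢ` with
`|tᵢ| ≤ 2 aᵢ`, the sum `Σ tᵢ aᵢ` is positive iff `t_r > 0`, where `r` is the
largest index with `t_r ≠ 0` ("lexicographic order"). -/
theorem lex_order_of_rapidly_increasing
    (a : ℕ → ℕ) (hpos : ∀ j, 0 < a j) (hmono : StrictMono a)
    (hgrow : ∀ j, 2 * a j * (1 + ∑ i ∈ Finset.range (j + 1), a i) < a (j + 1)) :
    ∀ (n : ℕ) (t : ℕ → ℤ), (∀ i < n, |t i| ≤ 2 * (a i : ℤ)) →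
      ∀ r < n, t r ≠ 0 → (∀ j, r < j → j < n → t j = 0) →
      (0 < ∑ i ∈ Finset.range n, t i * (a i : ℤ) ↔ 0 < t r) := by
  intro n t ht r hrn htr hzero
  -- The full sum equals the sum up to r+1
  have hsum : ∑ i ∈ Finset.range n, t i * (a i : ℤ)
      = ∑ i ∈ Finset.range r, t i * (a i : ℤ) + t r * (a r : ℤ) := by
    rw [← Finset.sum_range_succ]
    symm
    apply Finset.sum_subset
    · exact Finset.range_subset_range.2 hrn
    · intro j hj hj'
      simp only [Finset.mem_range] at hj hj'
      rw [hzero j (by omega) hj, zero_mul]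
  -- bound on the prefix
  have hb : |∑ i ∈ Finset.range r, t i * (a i : ℤ)| < (a r : ℤ) := by
    rcases Nat.eq_zero_or_pos r with h0 | hr
    · subst h0; simpa using (by exact_mod_cast hpos 0 : (0 : ℤ) < a 0)
    · obtain ⟨m, rfl⟩ := Nat.exists_eq_add_of_le hr
      simp only [Nat.add_comm 1 m] at *
      calc |∑ i ∈ Finset.range (m + 1), t i * (a i : ℤ)|
          ≤ ∑ i ∈ Finset.range (m + 1), |t i * (a i : ℤ)| :=
            Finset.abs_sum_le_sum_abs _ _
        _ ≤ ∑ i ∈ Finset.range (m + 1), 2 * (a m : ℤ) * (a i : ℤ) := by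
            apply Finset.sum_le_sum
            intro i hi
            simp only [Finset.mem_range] at hi
            rw [abs_mul, abs_of_nonneg (by positivity : (0 : ℤ) ≤ (a i : ℤ))]
            have h1 : |t i| ≤ 2 * (a i : ℤ) := ht i (by omega)
            have h2 : (a i : ℤ) ≤ (a m : ℤ) := by
              exact_mod_cast hmono.monotone (by omega : i ≤ m)
            nlinarith [abs_nonneg (t i), hpos i, (by positivity : (0:ℤ) ≤ (a i : ℤ))]
        _ = 2 * (a m : ℤ) * ∑ i ∈ Finset.range (m + 1), (a i : ℤ) := by
            rw [Finset.mul_sum]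
        _ < (a (m + 1) : ℤ) := by
            have := hgrow m
            have hcast : (2 * a m * (1 + ∑ i ∈ Finset.range (m + 1), a i) : ℤ)
                < (a (m + 1) : ℤ) := by exact_mod_cast this
            push_cast at hcast ⊢
            nlinarith [hpos m, (by positivity : (0:ℤ) ≤ (a m : ℤ))]
  rw [hsum]
  have har : (0 : ℤ) < (a r : ℤ) := by exact_mod_cast hpos r
  constructor
  · intro h
    by_contra hle
    push_neg at hle
    have : t r ≤ -1 := by omega
    have : t r * (a r : ℤ) ≤ -(a r : ℤ) := by nlinarith
    have := abs_lt.1 hb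
    linarith
  · intro h
    have : (1 : ℤ) ≤ t r := h
    have : (a r : ℤ) ≤ t r * (a r : ℤ) := by nlinarith
    have := abs_lt.1 hb
    linarith
end

section
/- Let A be a commutative algebra with a finite generating set G₀ each element of which has spectral radius strictly less than 1 with respect to some algebra norm on A. Then there exists an algebra norm ‖·‖ on A such that ‖s‖ < 1 for every s ∈ G₀. -/
open Filter

/-- A commutative normed algebra algebraically generated by a finite set
`G₀` of elements of spectral radius (computed via `lim ‖s^k‖^{1/k}`) strictly less
than 1 admits an algebra norm in which every generator has norm strictly less than 1. -/
theorem renorm_generators_below_one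
    {A : Type*} [NormedCommRing A] [NormedAlgebra ℂ A]
    (G₀ : Finset A) (hgen : Algebra.adjoin ℂ (G₀ : Set A) = ⊤)
    (hsr : ∀ s ∈ G₀, Filter.limsup (fun k : ℕ => ‖s ^ k‖ ^ (1 / (k : ℝ)))
      Filter.atTop < 1) :
    ∃ N : A → ℝ,
      (∀ x, 0 ≤ N x) ∧
      (∀ x, N x = 0 ↔ x = 0) ∧
      (∀ x y, N (x + y) ≤ N x + N y) ∧
      (∀ (c : ℂ) (x : A), N (c • x) = ‖c‖ * N x) ∧
      (∀ x y, N (x * y) ≤ N x * N y) ∧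
      (∀ s ∈ G₀, N s < 1) := by
  classical
  set L : A → ℝ := fun s => Filter.limsup (fun k : ℕ => ‖s ^ k‖ ^ (1 / (k : ℝ)))
      Filter.atTop with hLdef
  -- choose ρ with 0 < ρ < 1 and L s < ρ for all s ∈ G₀
  set m : ℝ := Finset.fold max (1/2) L G₀ with hmdef
  have hm_lt : m < 1 := by
    rw [hmdef, Finset.fold_max_lt]
    exact ⟨by norm_num, hsr⟩
  have hm_half : (1/2 : ℝ) ≤ m := by
    rw [hmdef]
    exact (Finset.le_fold_max _).2 (Or.inl le_rfl)
  set ρ : ℝ := (m + 1) / 2 with hρdef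
  have hρ0 : (0:ℝ) < ρ := by rw [hρdef]; linarith
  have hρ1 : ρ < 1 := by rw [hρdef]; linarith
  have hLρ : ∀ s ∈ G₀, L s < ρ := by
    intro s hs
    have : L s ≤ m := (Finset.le_fold_max _).2 (Or.inr ⟨s, hs, le_rfl⟩)
    rw [hρdef]; linarith
  have hρC : ‖((ρ:ℂ))‖ = ρ := by
    rw [Complex.norm_real, Real.norm_eq_abs, abs_of_pos hρ0]
  have hρCne : ((ρ:ℂ)) ≠ 0 := Complex.ofReal_ne_zero.2 (ne_of_gt hρ0)
  -- scaled generators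
  set t : A → A := fun s => ((ρ:ℂ))⁻¹ • s with htdef
  have hts : ∀ s, ((ρ:ℂ)) • t s = s := by
    intro s; rw [htdef]; simp only [smul_smul, mul_inv_cancel₀ hρCne, one_smul]
  -- powers of scaled generators are bounded
  have hbdd : ∀ s ∈ G₀, ∃ M : ℝ, ∀ k : ℕ, ‖(t s)^k‖ ≤ M := by
    intro s hs
    have hub : IsBoundedUnder (· ≤ ·) atTop (fun k : ℕ => ‖s ^ k‖ ^ (1 / (k : ℝ))) := by
      refine ⟨max ‖s‖ 1, eventually_atTop.2 ⟨1, fun k hk => ?_⟩⟩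
      have h1 : ‖s ^ k‖ ≤ ‖s‖ ^ k := norm_pow_le' s hk
      have h2 : ‖s ^ k‖ ^ (1 / (k:ℝ)) ≤ (‖s‖ ^ k) ^ (1 / (k:ℝ)) :=
        Real.rpow_le_rpow (norm_nonneg _) h1 (by positivity)
      have h3 : (‖s‖ ^ k) ^ (1 / (k:ℝ)) = ‖s‖ := by
        rw [one_div, ← Real.rpow_natCast ‖s‖ k, ← Real.rpow_mul (norm_nonneg s),
          mul_inv_cancel₀ (Nat.cast_ne_zero.2 (by omega) : (k:ℝ) ≠ 0), Real.rpow_one]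
      exact (h2.trans_eq h3).trans (le_max_left _ _)
    have hev : ∀ᶠ k : ℕ in atTop, ‖s ^ k‖ ^ (1 / (k:ℝ)) < ρ :=
      eventually_lt_of_limsup_lt (hLρ s hs) hub
    obtain ⟨K, hK⟩ := eventually_atTop.1 hev
    have hsmall : ∀ k : ℕ, max K 1 ≤ k → ‖(t s)^k‖ ≤ 1 := by
      intro k hk
      have hk1 : 1 ≤ k := le_trans (le_max_right _ _) hk
      have hkK : K ≤ k := le_trans (le_max_left _ _) hk
      have hkne : k ≠ 0 := by omega
      have h1 : ‖s ^ k‖ < ρ ^ k := by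
        calc ‖s ^ k‖ = (‖s ^ k‖ ^ (1 / (k:ℝ))) ^ k := by
              rw [one_div, Real.rpow_inv_natCast_pow (norm_nonneg _) hkne]
          _ < ρ ^ k :=
              pow_lt_pow_left₀ (hK k hkK) (Real.rpow_nonneg (norm_nonneg _) _) hkne
      have h2 : ‖(t s)^k‖ = ρ⁻¹ ^ k * ‖s ^ k‖ := by
        rw [htdef]
        simp only [smul_pow, norm_smul, norm_pow, norm_inv, hρC]
      rw [h2]
      calc ρ⁻¹ ^ k * ‖s ^ k‖ ≤ ρ⁻¹ ^ k * ρ ^ k :=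
            mul_le_mul_of_nonneg_left h1.le (by positivity)
        _ = 1 := by rw [← mul_pow, inv_mul_cancel₀ (ne_of_gt hρ0), one_pow]
    refine ⟨Finset.fold max 1 (fun k => ‖(t s)^k‖) (Finset.range (max K 1)), fun k => ?_⟩
    by_cases hk : k < max K 1
    · exact (Finset.le_fold_max _).2 (Or.inr ⟨k, Finset.mem_range.2 hk, le_rfl⟩)
    · exact le_trans (hsmall k (not_lt.1 hk)) ((Finset.le_fold_max _).2 (Or.inl le_rfl))
  choose! M hM using hbdd
  -- the semigroup
  set S : Submonoid A := Submonoid.closure (t '' (G₀ : Set A)) with hSdef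
  set C : ℝ := ‖(1:A)‖ * ∏ s ∈ G₀, max (M s) 1 with hCdef
  -- every element of S is a product of powers of scaled generators
  have hSform : ∀ w ∈ S, ∃ f : A → ℕ, w = ∏ s ∈ G₀, (t s) ^ (f s) := by
    intro w hw
    induction hw using Submonoid.closure_induction with
    | mem x hx =>
      obtain ⟨s₀, hs₀, rfl⟩ := hx
      refine ⟨fun a => if a = s₀ then 1 else 0, ?_⟩
      rw [Finset.prod_congr rfl (fun s _ =>
        (show (t s) ^ (if s = s₀ then 1 else 0) = if s = s₀ then t s else 1 by
          split <;> simp)),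
        Finset.prod_ite_eq' G₀ s₀ t, if_pos (Finset.mem_coe.1 hs₀)]
    | one => exact ⟨fun _ => 0, by simp⟩
    | mul x y hx hy ihx ihy =>
      obtain ⟨f, rfl⟩ := ihx
      obtain ⟨g, rfl⟩ := ihy
      exact ⟨f + g, by
        rw [← Finset.prod_mul_distrib]
        exact Finset.prod_congr rfl (fun s _ => by rw [Pi.add_apply, pow_add])⟩
  have hwle : ∀ w ∈ S, ‖w‖ ≤ C := by
    intro w hw
    obtain ⟨f, rfl⟩ := hSform w hw
    rw [hCdef]
    have key : ∀ T : Finset A, T ⊆ G₀ →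
        ‖∏ s ∈ T, (t s) ^ (f s)‖ ≤ ‖(1:A)‖ * ∏ s ∈ T, max (M s) 1 := by
      intro T
      induction T using Finset.cons_induction with
      | empty => intro _; simp
      | cons a T ha ih =>
        intro hsub
        have haG : a ∈ G₀ := hsub (Finset.mem_cons_self a T)
        have hT : T ⊆ G₀ := fun x hx => hsub (Finset.mem_cons.2 (Or.inr hx))
        rw [Finset.prod_cons, Finset.prod_cons]
        calc ‖(t a) ^ (f a) * ∏ s ∈ T, (t s) ^ (f s)‖
            ≤ ‖(t a) ^ (f a)‖ * ‖∏ s ∈ T, (t s) ^ (f s)‖ := norm_mul_le _ _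
          _ ≤ max (M a) 1 * (‖(1:A)‖ * ∏ s ∈ T, max (M s) 1) :=
              mul_le_mul (le_trans (hM a haG (f a)) (le_max_left _ _)) (ih hT)
                (norm_nonneg _) (le_trans zero_le_one (le_max_right _ _))
          _ = ‖(1:A)‖ * (max (M a) 1 * ∏ s ∈ T, max (M s) 1) := by ring
    exact key G₀ (subset_refl _)
  -- the auxiliary norm N₀
  set N₀ : A → ℝ := fun x => sSup ((fun w => ‖w * x‖) '' (S : Set A)) with hN₀def
  have hne0 : ∀ x : A, ((fun w => ‖w * x‖) '' (S : Set A)).Nonempty :=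
    fun x => ⟨‖(1:A) * x‖, 1, one_mem S, rfl⟩
  have hbdd0 : ∀ x, BddAbove ((fun w => ‖w * x‖) '' (S : Set A)) := by
    intro x
    refine ⟨C * ‖x‖, fun r hr => ?_⟩
    obtain ⟨w, hw, rfl⟩ := hr
    exact le_trans (norm_mul_le _ _) (mul_le_mul_of_nonneg_right (hwle w hw) (norm_nonneg _))
  have hmem0 : ∀ x : A, ∀ w ∈ S, ‖w * x‖ ≤ N₀ x :=
    fun x w hw => le_csSup (hbdd0 x) ⟨w, hw, rfl⟩
  have hle0 : ∀ x, ‖x‖ ≤ N₀ x := fun x => by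
    have := hmem0 x 1 (one_mem S); rwa [one_mul] at this
  have hpos0 : ∀ x, 0 ≤ N₀ x := fun x => le_trans (norm_nonneg x) (hle0 x)
  have heq00 : ∀ x, N₀ x = 0 → x = 0 := by
    intro x hx
    have := hle0 x
    rw [hx] at this
    exact norm_le_zero_iff.1 this
  have hadd0 : ∀ x y, N₀ (x + y) ≤ N₀ x + N₀ y := by
    intro x y
    apply csSup_le (hne0 _)
    rintro r ⟨w, hw, rfl⟩
    calc ‖w * (x + y)‖ = ‖w * x + w * y‖ := by rw [mul_add]
      _ ≤ ‖w * x‖ + ‖w * y‖ := norm_add_le _ _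
      _ ≤ N₀ x + N₀ y := add_le_add (hmem0 x w hw) (hmem0 y w hw)
  have hsmul0 : ∀ (a : ℂ) (x : A), N₀ (a • x) ≤ ‖a‖ * N₀ x := by
    intro a x
    apply csSup_le (hne0 _)
    rintro r ⟨w, hw, rfl⟩
    show ‖w * (a • x)‖ ≤ ‖a‖ * N₀ x
    rw [mul_smul_comm, norm_smul]
    exact mul_le_mul_of_nonneg_left (hmem0 x w hw) (norm_nonneg a)
  have hmul0 : ∀ x y : A, N₀ (x * y) ≤ N₀ x * N₀ y := by
    intro x y
    apply csSup_le (hne0 _)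
    rintro r ⟨w, hw, rfl⟩
    calc ‖w * (x * y)‖ = ‖(w * x) * y‖ := by rw [mul_assoc]
      _ ≤ ‖w * x‖ * ‖y‖ := norm_mul_le _ _
      _ ≤ N₀ x * N₀ y :=
          mul_le_mul (hmem0 x w hw) (hle0 y) (norm_nonneg y) (hpos0 x)
  -- the key contraction property for generators
  have hgen0 : ∀ s ∈ G₀, ∀ y : A, N₀ (s * y) ≤ ρ * N₀ y := by
    intro s hs y
    apply csSup_le (hne0 _)
    rintro r ⟨w, hw, rfl⟩
    have hts' : w * (s * y) = ((ρ:ℂ)) • ((w * t s) * y) := by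
      conv_lhs => rw [← hts s]
      rw [smul_mul_assoc, mul_smul_comm, mul_assoc]
    have hmemS : w * t s ∈ S :=
      mul_mem hw (Submonoid.subset_closure ⟨s, hs, rfl⟩)
    calc ‖w * (s * y)‖ = ρ * ‖(w * t s) * y‖ := by rw [hts', norm_smul, hρC]
      _ ≤ ρ * N₀ y := mul_le_mul_of_nonneg_left (hmem0 y _ hmemS) hρ0.le
  -- the operator norm N
  set N : A → ℝ := fun x => sSup (Set.range (fun y => N₀ (x * y) / N₀ y)) with hNdef
  have hkey : ∀ x y : A, N₀ (x * y) / N₀ y ≤ N₀ x := by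
    intro x y
    rcases eq_or_lt_of_le (hpos0 y) with h | h
    · rw [← h, div_zero]; exact hpos0 x
    · rw [div_le_iff₀ h]
      exact hmul0 x y
  have hbddN : ∀ x, BddAbove (Set.range (fun y => N₀ (x * y) / N₀ y)) := by
    intro x
    exact ⟨N₀ x, fun r ⟨y, hy⟩ => hy ▸ hkey x y⟩
  have hneN : ∀ x : A, (Set.range (fun y => N₀ (x * y) / N₀ y)).Nonempty :=
    fun x => ⟨N₀ (x * 1) / N₀ 1, 1, rfl⟩
  have hmemN : ∀ x y : A, N₀ (x * y) / N₀ y ≤ N x :=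
    fun x y => le_csSup (hbddN x) ⟨y, rfl⟩
  have hNnonneg : ∀ x, 0 ≤ N x := by
    intro x
    exact le_trans (div_nonneg (hpos0 _) (hpos0 _)) (hmemN x 1)
  have hNsmul_le : ∀ (a : ℂ) (x : A), N (a • x) ≤ ‖a‖ * N x := by
    intro a x
    apply csSup_le (hneN _)
    rintro r ⟨y, rfl⟩
    show N₀ ((a • x) * y) / N₀ y ≤ ‖a‖ * N x
    rcases eq_or_lt_of_le (hpos0 y) with h | h
    · rw [← h, div_zero]
      exact mul_nonneg (norm_nonneg a) (hNnonneg x)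
    · rw [smul_mul_assoc, div_le_iff₀ h]
      calc N₀ (a • (x * y)) ≤ ‖a‖ * N₀ (x * y) := hsmul0 a (x * y)
        _ = ‖a‖ * (N₀ (x * y) / N₀ y * N₀ y) := by
            rw [div_mul_cancel₀ _ (ne_of_gt h)]
        _ ≤ ‖a‖ * (N x * N₀ y) := by
            apply mul_le_mul_of_nonneg_left _ (norm_nonneg a)
            exact mul_le_mul_of_nonneg_right (hmemN x y) h.le
        _ = ‖a‖ * N x * N₀ y := by ring
  have hNzero : N 0 = 0 := by
    apply le_antisymm _ (hNnonneg 0)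
    apply csSup_le (hneN _)
    rintro r ⟨y, rfl⟩
    show N₀ (0 * y) / N₀ y ≤ 0
    rw [zero_mul]
    have : N₀ (0:A) = 0 := by
      apply le_antisymm _ (hpos0 0)
      apply csSup_le (hne0 0)
      rintro r ⟨w, hw, rfl⟩
      simp
    rw [this, zero_div]
  refine ⟨N, hNnonneg, ?_, ?_, ?_, ?_, ?_⟩
  · -- N x = 0 ↔ x = 0
    intro x
    constructor
    · intro hNx
      by_contra hx
      have h1ne : (1:A) ≠ 0 := by
        intro h1
        exact hx (by rw [← mul_one x, h1, mul_zero])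
      have hN₀1 : 0 < N₀ 1 := lt_of_lt_of_le (norm_pos_iff.2 h1ne) (hle0 1)
      have hN₀x : 0 < N₀ x := lt_of_lt_of_le (norm_pos_iff.2 hx) (hle0 x)
      have : N₀ (x * 1) / N₀ 1 ≤ N x := hmemN x 1
      rw [mul_one, hNx] at this
      exact absurd this (not_le.2 (div_pos hN₀x hN₀1))
    · rintro rfl; exact hNzero
  · -- triangle inequality
    intro x y
    apply csSup_le (hneN _)
    rintro r ⟨z, rfl⟩
    show N₀ ((x + y) * z) / N₀ z ≤ N x + N y
    rcases eq_or_lt_of_le (hpos0 z) with h | h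
    · rw [← h, div_zero]
      exact add_nonneg (hNnonneg x) (hNnonneg y)
    · calc N₀ ((x + y) * z) / N₀ z ≤ (N₀ (x * z) + N₀ (y * z)) / N₀ z := by
            apply div_le_div_of_nonneg_right _ h.le
            · rw [add_mul]; exact hadd0 _ _
        _ = N₀ (x * z) / N₀ z + N₀ (y * z) / N₀ z := add_div _ _ _
        _ ≤ N x + N y := add_le_add (hmemN x z) (hmemN y z)
  · -- homogeneity
    intro a x
    rcases eq_or_ne a 0 with rfl | ha
    · rw [zero_smul, norm_zero, zero_mul, hNzero]
    · apply le_antisymm (hNsmul_le a x)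
      have h2 : N x ≤ ‖a⁻¹‖ * N (a • x) := by
        have := hNsmul_le a⁻¹ (a • x)
        rwa [smul_smul, inv_mul_cancel₀ ha, one_smul] at this
      have h3 : ‖a‖ * N x ≤ ‖a‖ * (‖a⁻¹‖ * N (a • x)) :=
        mul_le_mul_of_nonneg_left h2 (norm_nonneg a)
      rwa [← mul_assoc, ← norm_mul, mul_inv_cancel₀ ha, norm_one, one_mul] at h3
  · -- submultiplicativity
    intro x y
    apply csSup_le (hneN _)
    rintro r ⟨z, rfl⟩
    show N₀ ((x * y) * z) / N₀ z ≤ N x * N y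
    rcases eq_or_lt_of_le (hpos0 (y * z)) with h | h
    · have hyz : y * z = 0 := heq00 _ h.symm
      have : (x * y) * z = 0 := by rw [mul_assoc, hyz, mul_zero]
      rw [this]
      have hN₀0 : N₀ (0:A) = 0 := by
        apply le_antisymm _ (hpos0 0)
        apply csSup_le (hne0 0)
        rintro r ⟨w, hw, rfl⟩
        simp
      rw [hN₀0, zero_div]
      exact mul_nonneg (hNnonneg x) (hNnonneg y)
    · rcases eq_or_lt_of_le (hpos0 z) with hz | hz
      · rw [← hz, div_zero]
        exact mul_nonneg (hNnonneg x) (hNnonneg y)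
      · have heq : N₀ ((x * y) * z) / N₀ z
            = (N₀ (x * (y * z)) / N₀ (y * z)) * (N₀ (y * z) / N₀ z) := by
          rw [div_mul_div_comm, mul_comm (N₀ (y*z)) (N₀ z),
            mul_div_mul_right _ _ (ne_of_gt h), mul_assoc]
        rw [heq]
        exact mul_le_mul (hmemN x (y * z)) (hmemN y z)
          (div_nonneg (hpos0 _) (hpos0 _)) (hNnonneg x)
  · -- generators have norm < 1
    intro s hs
    have : N s ≤ ρ := by
      apply csSup_le (hneN _)
      rintro r ⟨y, rfl⟩
      show N₀ (s * y) / N₀ y ≤ ρ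
      rcases eq_or_lt_of_le (hpos0 y) with h | h
      · rw [← h, div_zero]; exact hρ0.le
      · rw [div_le_iff₀ h]
        exact hgen0 s hs y
    exact lt_of_le_of_lt this hρ1
end

section
/- Let H be a normed space, S a finite subset of bounded operators on H each of norm at most 1 that commute, φ a bounded linear functional on H, and for x ∈ H define N(x)² = Σ over index functions i: S → ℕ₀ of |φ((∏_{s∈S} s^{i(s)}) x)|², assumed finite for all x. Then for each s₀ ∈ S and x ∈ H, N(s₀ x) ≤ N(x). -/
open scoped BigOperators

/-- The product `∏_{s ∈ S} s^{f s}` of powers of a finite commuting family of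
operators. -/
noncomputable def prodPow {H ι : Type*} [Fintype ι]
    [NormedAddCommGroup H] [NormedSpace ℂ H]
    (T : ι → H →L[ℂ] H) (hcomm : ∀ i j, Commute (T i) (T j)) (f : ι → ℕ) :
    H →L[ℂ] H :=
  Finset.univ.noncommProd (fun i => T i ^ f i)
    (fun i _ j _ _ => Commute.pow_pow (hcomm i j) _ _)

open Finset in
lemma prodPow_add_single {H ι : Type*} [Fintype ι] [DecidableEq ι]
    [NormedAddCommGroup H] [NormedSpace ℂ H]
    (T : ι → H →L[ℂ] H) (hcomm : ∀ i j, Commute (T i) (T j)) (f : ι → ℕ) (i₀ : ι) :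
    prodPow T hcomm (f + Pi.single i₀ 1) = prodPow T hcomm f * T i₀ := by
  classical
  unfold prodPow
  have h1 : (fun i => T i ^ (f + Pi.single i₀ 1 : ι → ℕ) i) =
      (fun i => T i ^ f i) * (fun i => T i ^ Pi.single i₀ 1 i) := by
    funext i; simp [pow_add]
  have comm_ff : (↑(univ : Finset ι) : Set ι).Pairwise (Function.onFun Commute fun i => T i ^ f i) :=
    fun i _ j _ _ => Commute.pow_pow (hcomm i j) _ _
  have comm_gg : (↑(univ : Finset ι) : Set ι).Pairwise
      (Function.onFun Commute fun i => T i ^ Pi.single i₀ 1 i) :=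
    fun i _ j _ _ => Commute.pow_pow (hcomm i j) _ _
  have comm_gf : (↑(univ : Finset ι) : Set ι).Pairwise
      (fun i j => Commute (T i ^ Pi.single i₀ 1 i) (T j ^ f j)) :=
    fun i _ j _ _ => by exact Commute.pow_pow (hcomm i j) ((Pi.single i₀ 1 : ι → ℕ) i) (f j)
  have h2 : univ.noncommProd (fun i => T i ^ (Pi.single i₀ 1 : ι → ℕ) i) comm_gg = T i₀ := by
    refine (noncommProd_congr (insert_erase (mem_univ i₀)).symm (fun j _ => rfl)
      (fun i _ j _ _ => by exact Commute.pow_pow (hcomm i j) _ _)).trans ?_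
    erw [noncommProd_insert_of_notMem _ _ _ _ (notMem_erase _ _),
      noncommProd_eq_pow_card (univ.erase i₀) _ _ 1
        (fun j hj => by simp [Pi.single_apply, (Finset.mem_erase.1 hj).1]),
      one_pow, mul_one]
    simp
  refine ((noncommProd_congr rfl (fun i _ => congrFun h1 i)
    (fun i _ j _ _ => by exact Commute.pow_pow (hcomm i j) _ _)).trans ?_)
  rw [noncommProd_mul_distrib _ _ comm_ff comm_gg comm_gf, h2]

/-- With `N(x)² = Σ_{f : S → ℕ} |φ((∏ s^{f s}) x)|²` (assumed finite)
built from a finite commuting family `S` of contractions and a functional `φ`,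
one has `N(s₀ x) ≤ N(x)` for every `s₀ ∈ S`. -/
theorem seminorm_decreases_under_generators
    {H ι : Type*} [Fintype ι] [NormedAddCommGroup H] [NormedSpace ℂ H]
    (T : ι → H →L[ℂ] H) (hcomm : ∀ i j, Commute (T i) (T j))
    (hnorm : ∀ i, ‖T i‖ ≤ 1) (φ : H →L[ℂ] ℂ)
    (hfin : ∀ x : H, Summable (fun f : ι → ℕ => ‖φ ((prodPow T hcomm f) x)‖ ^ 2))
    (i₀ : ι) (x : H) :
    ∑' f : ι → ℕ, ‖φ ((prodPow T hcomm f) (T i₀ x))‖ ^ 2 ≤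
    ∑' f : ι → ℕ, ‖φ ((prodPow T hcomm f) x)‖ ^ 2 := by
  classical
  set F : (ι → ℕ) → ℝ := fun f => ‖φ ((prodPow T hcomm f) x)‖ ^ 2 with hF
  set e : (ι → ℕ) → (ι → ℕ) := fun f => f + Pi.single i₀ 1 with he
  have hinj : Function.Injective e := add_left_injective _
  have hkey : ∀ f, ‖φ ((prodPow T hcomm f) (T i₀ x))‖ ^ 2 = F (e f) := by
    intro f
    have := congrArg (fun A : H →L[ℂ] H => ‖φ (A x)‖ ^ 2) (prodPow_add_single T hcomm f i₀)
    simp only [ContinuousLinearMap.mul_apply] at this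
    rw [hF, he, ← this]
  calc ∑' f : ι → ℕ, ‖φ ((prodPow T hcomm f) (T i₀ x))‖ ^ 2
      = ∑' f, F (e f) := by simp only [hkey]
    _ ≤ ∑' f, F f := ((hfin x).comp_injective hinj).tsum_le_tsum_of_inj e hinj (fun c _ => by positivity)
        (fun f => le_rfl) (hfin x)
end

section
/- Let (a_k) be a strictly increasing sequence of positive integers with a_k² > 1 + 2^{2 + a_{k-1}²} for all k ≥ 2. Then for every n, Σ_{k=n+2}^∞ 2 (a_k² − 1)^{-1} 2^{a_{n+1}²} ≤ 1. -/
/-- If `(a_k)` is a strictly increasing sequence of positive integers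
with `a_{k+1}² > 1 + 2^{2 + a_k²}`, then for every `n`,
`Σ_{k=n+2}^∞ 2 (a_k² − 1)⁻¹ 2^{a_{n+1}²} ≤ 1`. -/
theorem tail_sum_le_one
    (a : ℕ → ℕ) (hpos : ∀ k, 0 < a k) (hmono : StrictMono a)
    (hgrow : ∀ k, (1 : ℝ) + 2 ^ (2 + (a k) ^ 2) < ((a (k + 1)) ^ 2 : ℝ)) :
    ∀ n : ℕ,
      ∑' k : ℕ, (2 : ℝ) / (((a (n + 2 + k)) ^ 2 : ℝ) - 1) *
        2 ^ ((a (n + 1)) ^ 2) ≤ 1 := by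
  intro n
  -- natural-number version of the growth hypothesis
  have hgrowN : ∀ k, 1 + 2 ^ (2 + (a k) ^ 2) < (a (k + 1)) ^ 2 := by
    intro k
    have := hgrow k
    exact_mod_cast this
  set m := (a (n + 1)) ^ 2 with hm
  -- key induction
  have key : ∀ k, 1 + 2 ^ (2 + k + m) ≤ (a (n + 2 + k)) ^ 2 := by
    intro k
    induction k with
    | zero =>
      have := hgrowN (n + 1)
      simpa using this.le
    | succ k ih =>
      have h1 := hgrowN (n + 2 + k)
      have h2 : 2 + (k + 1) + m ≤ 2 + (a (n + 2 + k)) ^ 2 := by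
        have : k + m < 2 ^ (2 + k + m) := Nat.lt_of_le_of_lt
          (by omega : k + m ≤ 2 + k + m) Nat.lt_two_pow_self
        omega
      calc 1 + 2 ^ (2 + (k + 1) + m) ≤ 1 + 2 ^ (2 + (a (n + 2 + k)) ^ 2) :=
            Nat.add_le_add_left (Nat.pow_le_pow_right (by norm_num) h2) 1
        _ ≤ (a (n + 2 + (k + 1))) ^ 2 := by
            have : n + 2 + k + 1 = n + 2 + (k + 1) := by ring
            rw [← this]; exact (hgrowN (n + 2 + k)).le
  -- term-wise bound
  have hterm : ∀ k : ℕ, (2 : ℝ) / (((a (n + 2 + k)) ^ 2 : ℝ) - 1) * 2 ^ m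
      ≤ (1 / 2 : ℝ) ^ (k + 1) := by
    intro k
    have hk := key k
    have hkR : (1 : ℝ) + 2 ^ (2 + k + m) ≤ ((a (n + 2 + k)) ^ 2 : ℝ) := by
      exact_mod_cast hk
    have hd : (2 : ℝ) ^ (2 + k + m) ≤ ((a (n + 2 + k)) ^ 2 : ℝ) - 1 := by linarith
    have hdpos : (0 : ℝ) < 2 ^ (2 + k + m) := by positivity
    have h1 : (2 : ℝ) / (((a (n + 2 + k)) ^ 2 : ℝ) - 1) ≤ 2 / 2 ^ (2 + k + m) :=
      div_le_div_of_nonneg_left (by norm_num) hdpos hd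
    have h2 : (2 : ℝ) / 2 ^ (2 + k + m) * 2 ^ m = (1 / 2 : ℝ) ^ (k + 1) := by
      rw [pow_add, pow_add]
      field_simp
      ring_nf; rw [← mul_pow]; norm_num
    calc (2 : ℝ) / (((a (n + 2 + k)) ^ 2 : ℝ) - 1) * 2 ^ m
        ≤ 2 / 2 ^ (2 + k + m) * 2 ^ m := by
          apply mul_le_mul_of_nonneg_right h1 (by positivity)
      _ = (1 / 2 : ℝ) ^ (k + 1) := h2
  -- nonnegativity of terms
  have hnn : ∀ k : ℕ, (0 : ℝ) ≤ (2 : ℝ) / (((a (n + 2 + k)) ^ 2 : ℝ) - 1) * 2 ^ m := by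
    intro k
    have hk := key k
    have hkR : (1 : ℝ) + 2 ^ (2 + k + m) ≤ ((a (n + 2 + k)) ^ 2 : ℝ) := by
      exact_mod_cast hk
    have : (0 : ℝ) < ((a (n + 2 + k)) ^ 2 : ℝ) - 1 := by
      have : (0 : ℝ) < 2 ^ (2 + k + m) := by positivity
      linarith
    positivity
  have hgsum : Summable (fun k : ℕ => (1 / 2 : ℝ) ^ (k + 1)) := by
    apply Summable.comp_injective (summable_geometric_of_lt_one (by norm_num) (by norm_num))
      (add_left_injective 1)
  have hsummable : Summable (fun k : ℕ => (2 : ℝ) / (((a (n + 2 + k)) ^ 2 : ℝ) - 1) * 2 ^ m) :=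
    Summable.of_nonneg_of_le hnn hterm hgsum
  have hgeom : ∑' k : ℕ, (1 / 2 : ℝ) ^ (k + 1) = 1 := by
    have : ∑' k : ℕ, (1 / 2 : ℝ) ^ (k + 1) = (1 / 2) * ∑' k : ℕ, (1 / 2 : ℝ) ^ k := by
      rw [← tsum_mul_left]
      congr 1; ext k; rw [pow_succ]; ring
    rw [this, tsum_geometric_of_lt_one (by norm_num) (by norm_num)]
    norm_num
  calc ∑' k : ℕ, (2 : ℝ) / (((a (n + 2 + k)) ^ 2 : ℝ) - 1) * 2 ^ m
      ≤ ∑' k : ℕ, (1 / 2 : ℝ) ^ (k + 1) := Summable.tsum_le_tsum hterm hsummable hgsum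
    _ = 1 := hgeom
end

section
/- Let A be a commutative semisimple Banach algebra whose character space is {χ_n : n ∈ ℕ} and suppose there is a bounded sequence (ψ_n) in A* with ψ_n(g) = 1 for all n, where each ψ_n lies in the linear span of {χ_j : a_n < j ≤ a_{n+1}} for a strictly increasing sequence (a_n) of positive integers, and there are elements e_j ∈ A with χ_i(e_j) = δ_{ij}. Then g is not in the closed linear span of {e_j : j ∈ ℕ}. -/
/-- Let `A` be a commutative Banach algebra with characters `χ_n`, let
`(a_n)` be strictly increasing, and suppose `(ψ_n)` is a uniformly bounded sequence of
functionals with `ψ_n ∈ span{χ_j : a_n < j ≤ a_{n+1}}` and `ψ_n(g) = 1`, and that the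
`e_j ∈ A` satisfy `χ_i(e_j) = δ_{ij}`. Then `g` is not in the closed linear span of
`{e_j}`. -/
theorem generator_not_in_closed_span_of_idempotents
    {A : Type*} [NormedCommRing A] [NormedAlgebra ℂ A] [CompleteSpace A]
    (χ : ℕ → A →L[ℂ] ℂ) (hmul : ∀ n (x y : A), χ n (x * y) = χ n x * χ n y)
    (a : ℕ → ℕ) (hmono : StrictMono a)
    (ψ : ℕ → A →L[ℂ] ℂ) (C : ℝ) (hbdd : ∀ n, ‖ψ n‖ ≤ C)
    (hspan : ∀ n, ψ n ∈ Submodule.span ℂ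
      {φ : A →L[ℂ] ℂ | ∃ j : ℕ, a n < j ∧ j ≤ a (n + 1) ∧ φ = χ j})
    (g : A) (hg : ∀ n, ψ n g = 1)
    (e : ℕ → A) (he : ∀ i j, χ i (e j) = if i = j then 1 else 0) :
    g ∉ closure (Submodule.span ℂ (Set.range e) : Set A) := by
  intro hmem
  have hC0 : (0:ℝ) ≤ C := le_trans (norm_nonneg _) (hbdd 0)
  obtain ⟨x, hx, hdist⟩ := Metric.mem_closure_iff.mp hmem (1/(C+1)) (by positivity)
  obtain ⟨c, hc⟩ := Finsupp.mem_span_range_iff_exists_finsupp.mp hx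
  set N := c.support.sup id with hN
  have haN : N ≤ a N := hmono.le_apply
  have hx0 : ∀ φ ∈ Submodule.span ℂ
      {φ : A →L[ℂ] ℂ | ∃ j : ℕ, a N < j ∧ j ≤ a (N + 1) ∧ φ = χ j}, φ x = 0 := by
    intro φ hφ
    induction hφ using Submodule.span_induction with
    | mem φ hφ =>
      obtain ⟨j, hj1, hj2, rfl⟩ := hφ
      rw [← hc, Finsupp.sum, map_sum]
      apply Finset.sum_eq_zero
      intro i hi
      have hiN : i ≤ N := Finset.le_sup (f := id) hi
      rw [map_smul, he j i, if_neg (by omega), smul_zero]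
    | zero => simp
    | add φ₁ φ₂ _ _ h1 h2 => simp [h1, h2]
    | smul r φ _ h => simp [h]
  have h0 : ψ N x = 0 := hx0 (ψ N) (hspan N)
  have h1 : (1:ℝ) ≤ ‖ψ N‖ * ‖g - x‖ := by
    calc (1:ℝ) = ‖ψ N (g - x)‖ := by rw [map_sub, h0, sub_zero, hg N]; simp
    _ ≤ ‖ψ N‖ * ‖g - x‖ := (ψ N).le_opNorm _
  have h2 : ‖g - x‖ < 1/(C+1) := by rwa [dist_eq_norm] at hdist
  have h3 : ‖ψ N‖ ≤ C := hbdd N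
  have h4 : (0:ℝ) ≤ ‖g - x‖ := norm_nonneg _
  have h5 : (0:ℝ) ≤ ‖ψ N‖ := norm_nonneg _
  have hC1 : (0:ℝ) < C + 1 := by linarith
  have h6 : C * (1/(C+1)) < 1 := by
    rw [mul_one_div]; exact (div_lt_one hC1).mpr (by linarith)
  linarith [mul_le_mul_of_nonneg_right h3 h4, mul_le_mul_of_nonneg_left h2.le hC0]
end
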